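/- (Gauss's product formula) For every natural number q ≥ 2, Σ_{r=1}^{q−1} log Γ(r/q) = ((q−1)/2) · log(2π) − (1/2) · log q; equivalently, ∏_{r=1}^{q−1} Γ(r/q) = (2π)^{(q−1)/2} / √q. -/

import Mathlib

open Complex in
lemma abs_one_sub_exp (θ : ℝ) :
    ‖(1 - Complex.exp (θ * I))‖ = 2 * |Real.sin (θ / 2)| := by
  have h2 : -2 * I * Complex.sin ((θ:ℂ)/2) =
      Complex.exp (-((θ:ℂ)/2) * I) - Complex.exp (((θ:ℂ)/2) * I) := by
    rw [Complex.sin]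
    field_simp
    ring_nf
    simp [Complex.I_sq]
    ring
  have h : (1 : ℂ) - Complex.exp (θ * I) =
      Complex.exp (((θ:ℂ)/2) * I) * (-2 * I * Complex.sin ((θ:ℂ)/2)) := by
    rw [h2, mul_sub, ← Complex.exp_add, ← Complex.exp_add]
    norm_num
    rw [show ((θ:ℂ)/2 * I + θ/2*I) = θ * I by ring]
  have hc : ((θ:ℂ)/2) = ((θ/2 : ℝ) : ℂ) := by push_cast; ring
  have he : ‖(Complex.exp (((θ:ℂ)/2) * I))‖ = 1 := by
    rw [hc]; exact Complex.norm_exp_ofReal_mul_I (θ/2)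
  rw [h, norm_mul, norm_mul, norm_mul, he, hc, ← Complex.ofReal_sin, Complex.norm_real]
  simp

open Real in
lemma sin_prod (q : ℕ) (hq : 2 ≤ q) :
    ∏ r ∈ Finset.Ico 1 q, Real.sin (π * r / q) = q / 2 ^ (q - 1) := by
  obtain ⟨n, rfl⟩ : ∃ n, q = n + 1 := ⟨q - 1, by omega⟩
  set q := n + 1
  have hq0 : (q : ℝ) ≠ 0 := by positivity
  have hμ : IsPrimitiveRoot (Complex.exp (2 * π * Complex.I / q)) q :=
    Complex.isPrimitiveRoot_exp q (by omega)
  have hp := hμ.prod_one_sub_pow_eq_order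
  apply_fun (‖·‖) at hp
  rw [norm_prod] at hp
  have key : ∀ k ∈ Finset.range n,
      ‖(1 - Complex.exp (2 * π * Complex.I / q) ^ (k + 1))‖ =
        2 * Real.sin (π * (k + 1) / q) := by
    intro k hk
    have hk' : k + 1 < q := by have := Finset.mem_range.mp hk; omega
    have hθ : (Complex.exp (2 * π * Complex.I / q)) ^ (k + 1) =
        Complex.exp (((2 * π * (k + 1) / q : ℝ) : ℂ) * Complex.I) := by
      rw [← Complex.exp_nat_mul]
      push_cast
      ring_nf
    rw [hθ, abs_one_sub_exp]
    have h1 : 2 * π * (k + 1) / q / 2 = π * (k + 1) / q := by ring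
    rw [h1, abs_of_pos]
    apply Real.sin_pos_of_pos_of_lt_pi
    · positivity
    · rw [div_lt_iff₀ (by positivity)]
      have : ((k : ℝ) + 1) < q := by exact_mod_cast hk'
      nlinarith [Real.pi_pos]
  rw [Finset.prod_congr rfl key] at hp
  rw [Finset.prod_mul_distrib, Finset.prod_const, Finset.card_range] at hp
  have habs : ‖((n : ℂ) + 1)‖ = (q : ℝ) := by
    rw [show ((n : ℂ) + 1) = ((q : ℝ) : ℂ) by push_cast [q]; ring, Complex.norm_real, Real.norm_eq_abs,
      abs_of_pos (by positivity)]
  rw [habs] at hp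
  have hrw : ∏ r ∈ Finset.Ico 1 q, Real.sin (π * r / q) =
      ∏ k ∈ Finset.range n, Real.sin (π * (k + 1) / q) := by
    rw [Finset.prod_Ico_eq_prod_range]
    simp only [q, Nat.add_sub_cancel]
    apply Finset.prod_congr rfl
    intro k _
    push_cast
    ring_nf
  rw [hrw, show q - 1 = n from rfl]
  field_simp
  linarith [hp]

theorem gauss_product_formula (q : ℕ) (hq : 2 ≤ q) :
    (∑ r ∈ Finset.Ico 1 q, Real.log (Real.Gamma ((r : ℝ) / q)) =
        ((q : ℝ) - 1) / 2 * Real.log (2 * Real.pi) - (1/2) * Real.log q) ∧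
    (∏ r ∈ Finset.Ico 1 q, Real.Gamma ((r : ℝ) / q) =
        (2 * Real.pi) ^ (((q : ℝ) - 1) / 2) / Real.sqrt q) := by
  have pi_pos := Real.pi_pos
  have hq0 : (0 : ℝ) < q := by positivity
  set P := ∏ r ∈ Finset.Ico 1 q, Real.Gamma ((r : ℝ) / q) with hPdef
  have hpos : ∀ r ∈ Finset.Ico 1 q, 0 < Real.Gamma ((r : ℝ) / q) := by
    intro r hr
    obtain ⟨h1, h2⟩ := Finset.mem_Ico.mp hr
    apply Real.Gamma_pos_of_pos
    have : (0 : ℝ) < r := by exact_mod_cast h1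
    positivity
  have hPpos : 0 < P := Finset.prod_pos hpos
  -- reindexing
  have hre : P = ∏ r ∈ Finset.Ico 1 q, Real.Gamma (((q - r : ℕ) : ℝ) / q) := by
    rw [hPdef]
    refine Finset.prod_nbij' (fun r => q - r) (fun r => q - r) ?_ ?_ ?_ ?_ ?_ <;>
      intro a ha <;> simp only [Finset.mem_Ico] at * <;>
      first
        | omega
        | rw [Nat.sub_sub_self ha.2.le]
  have hP2 : P ^ 2 = (2 * Real.pi) ^ (q - 1) / q := by
    have : P ^ 2 = ∏ r ∈ Finset.Ico 1 q,
        (Real.Gamma ((r : ℝ) / q) * Real.Gamma (((q - r : ℕ) : ℝ) / q)) := by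
      rw [Finset.prod_mul_distrib, ← hre, sq]
    rw [this]
    have step : ∀ r ∈ Finset.Ico 1 q,
        Real.Gamma ((r : ℝ) / q) * Real.Gamma (((q - r : ℕ) : ℝ) / q) =
          Real.pi / Real.sin (Real.pi * r / q) := by
      intro r hr
      obtain ⟨h1, h2⟩ := Finset.mem_Ico.mp hr
      have hcast : ((q - r : ℕ) : ℝ) / q = 1 - (r : ℝ) / q := by
        rw [Nat.cast_sub h2.le]
        field_simp
      rw [hcast, Real.Gamma_mul_Gamma_one_sub, mul_div_assoc]
    rw [Finset.prod_congr rfl step, Finset.prod_div_distrib, Finset.prod_const,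
      Nat.card_Ico, sin_prod q hq]
    rw [div_div_eq_mul_div, mul_pow]
    field_simp
  have hsin : P = (2 * Real.pi) ^ (((q : ℝ) - 1) / 2) / Real.sqrt q := by
    have hP : P = Real.sqrt ((2 * Real.pi) ^ (q - 1) / q) := by
      rw [← hP2, Real.sqrt_sq hPpos.le]
    have hd : Real.sqrt ((2 * Real.pi) ^ (q - 1) / q) =
        Real.sqrt ((2 * Real.pi) ^ (q - 1)) / Real.sqrt q := by
      rw [Real.sqrt_div (by positivity)]
    have hnum : Real.sqrt ((2 * Real.pi) ^ (q - 1)) =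
        (2 * Real.pi) ^ (((q : ℝ) - 1) / 2) := by
      rw [Real.sqrt_eq_rpow, ← Real.rpow_natCast (2 * Real.pi) (q - 1),
        ← Real.rpow_mul (by positivity)]
      congr 1
      have : ((q - 1 : ℕ) : ℝ) = (q : ℝ) - 1 := by
        rw [Nat.cast_sub (by omega)]; norm_num
      rw [this]; ring
    rw [hP, hd, hnum]
  refine ⟨?_, hsin⟩
  have hlog : ∑ r ∈ Finset.Ico 1 q, Real.log (Real.Gamma ((r : ℝ) / q)) =
      Real.log P := by
    rw [hPdef, Real.log_prod]
    intro x hx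
    exact (hpos x hx).ne'
  rw [hlog, hsin, Real.log_div (by positivity) (by positivity),
    Real.log_rpow (by positivity), Real.log_sqrt (by positivity)]
  ring
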